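/- arXiv:gr-qc/0203066 — 3 statements merged into one kernel-verified Lean document; each statement's English description precedes it below -/
import Mathlib

section
/- For all real numbers w, w̃ > 0, L, L̃ ≥ 0, m ≥ 0, and s ≥ 1, the inequality ( w̃²·(m² + w² + L/s²) − w²·(1 + w̃² + L̃/s²) ) / ( w̃·√(m² + w² + L/s²) + w·√(1 + w̃² + L̃/s²) ) ≤ w̃·(m² + L)/w holds. -/
/-- Key algebraic estimate for the characteristic equation. -/
theorem stmt_2 (w wt L Lt m s : ℝ) (hw : 0 < w) (hwt : 0 < wt)
    (hL : 0 ≤ L) (hLt : 0 ≤ Lt) (hm : 0 ≤ m) (hs : 1 ≤ s) :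
    (wt ^ 2 * (m ^ 2 + w ^ 2 + L / s ^ 2) - w ^ 2 * (1 + wt ^ 2 + Lt / s ^ 2)) /
      (wt * Real.sqrt (m ^ 2 + w ^ 2 + L / s ^ 2) +
        w * Real.sqrt (1 + wt ^ 2 + Lt / s ^ 2)) ≤
    wt * (m ^ 2 + L) / w := by
  have hs0 : (0:ℝ) < s := lt_of_lt_of_le one_pos hs
  have hs2 : (1:ℝ) ≤ s ^ 2 := by nlinarith
  have hLs : 0 ≤ L / s ^ 2 := div_nonneg hL (by positivity)
  have hLts : 0 ≤ Lt / s ^ 2 := div_nonneg hLt (by positivity)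
  set A := m ^ 2 + w ^ 2 + L / s ^ 2 with hA
  set B := (1:ℝ) + wt ^ 2 + Lt / s ^ 2 with hB
  have hA0 : 0 ≤ A := by positivity
  have hB0 : 0 ≤ B := by positivity
  have hsqB : wt ≤ Real.sqrt B := by
    rw [show wt = Real.sqrt (wt ^ 2) by rw [Real.sqrt_sq hwt.le]]
    exact Real.sqrt_le_sqrt (by rw [hB]; nlinarith)
  have hD : w * wt ≤ wt * Real.sqrt A + w * Real.sqrt B := by
    have h1 : 0 ≤ wt * Real.sqrt A := by positivity
    nlinarith [mul_le_mul_of_nonneg_left hsqB hw.le]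
  have hDpos : 0 < wt * Real.sqrt A + w * Real.sqrt B :=
    lt_of_lt_of_le (by positivity) hD
  have hnum : wt ^ 2 * A - w ^ 2 * B ≤ wt ^ 2 * (m ^ 2 + L) := by
    have hLL : L / s ^ 2 ≤ L := by
      rw [div_le_iff₀ (by positivity)]; nlinarith
    rw [hA, hB]; nlinarith [sq_nonneg w, mul_nonneg (sq_nonneg w) hLts]
  have hRHS : 0 ≤ wt * (m ^ 2 + L) / w := by positivity
  rcases le_or_gt (wt ^ 2 * A - w ^ 2 * B) 0 with h | h
  · exact le_trans (div_nonpos_of_nonpos_of_nonneg h hDpos.le) hRHS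
  · calc (wt ^ 2 * A - w ^ 2 * B) / (wt * Real.sqrt A + w * Real.sqrt B)
        ≤ (wt ^ 2 * A - w ^ 2 * B) / (w * wt) :=
          div_le_div_of_nonneg_left h.le (by positivity) hD
      _ ≤ wt ^ 2 * (m ^ 2 + L) / (w * wt) :=
          div_le_div_of_nonneg_right hnum (by positivity) |>.trans_eq rfl
      _ = wt * (m ^ 2 + L) / w := by field_simp
end

section
/- Suppose μ : [1,∞) × ℝ → ℝ is differentiable in t and satisfies the equation e^{−2μ(t,θ)}·(2t·μ_t(t,θ) − 1) + 1 = 8π t² p(t,θ) with p(t,θ) ≥ 0. Then for every t ≥ 1 and θ, e^{2μ(t,θ)} ≥ t / (e^{−2μ(1,θ)} − 1 + t). -/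
open Real

/-- Lower bound on the lapse from integrating the field equation (af2)
with nonnegative pressure. -/
theorem stmt_4 (μ μt p : ℝ → ℝ → ℝ)
    (hderiv : ∀ θ : ℝ, ∀ t ≥ (1:ℝ), HasDerivAt (fun s => μ s θ) (μt t θ) t)
    (heq : ∀ θ : ℝ, ∀ t ≥ (1:ℝ),
      Real.exp (-2 * μ t θ) * (2 * t * μt t θ - 1) + 1 = 8 * π * t ^ 2 * p t θ)
    (hp : ∀ θ : ℝ, ∀ t ≥ (1:ℝ), 0 ≤ p t θ) :
    ∀ θ : ℝ, ∀ t ≥ (1:ℝ),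
      Real.exp (2 * μ t θ) ≥ t / (Real.exp (-2 * μ 1 θ) - 1 + t) := by
  intro θ t ht
  set g : ℝ → ℝ := fun s => Real.exp (-2 * μ s θ) with hg
  have hgpos : ∀ s, 0 < g s := fun s => Real.exp_pos _
  set h : ℝ → ℝ := fun u => u * (g u - 1) with hh_def
  have hh : ∀ s ∈ Set.Ici (1:ℝ), HasDerivAt h (-(8 * π * s ^ 2 * p s θ)) s := by
    intro s hs
    have h1 : HasDerivAt (fun u => μ u θ) (μt s θ) s := hderiv θ s hs
    have h2 : HasDerivAt (fun u => -2 * μ u θ) (-2 * μt s θ) s := h1.const_mul _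
    have h3 : HasDerivAt g (Real.exp (-2 * μ s θ) * (-2 * μt s θ)) s := h2.exp
    have h4 : HasDerivAt (fun u => u * (g u - 1)) _ s := (hasDerivAt_id s).mul (h3.sub_const 1)
    have hE := heq θ s hs
    convert h4 using 1
    simp only [hg, id_eq]
    linear_combination hE
  have hcont : ContinuousOn h (Set.Ici 1) :=
    fun s hs => ((hh s hs).continuousAt).continuousWithinAt
  have hanti : AntitoneOn h (Set.Ici 1) := by
    apply antitoneOn_of_deriv_nonpos (convex_Ici 1) hcont
    · intro s hs
      rw [interior_Ici] at hs
      exact ((hh s (Set.mem_Ici.mpr (le_of_lt hs))).differentiableAt).differentiableWithinAt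
    · intro s hs
      rw [interior_Ici] at hs
      rw [(hh s (Set.mem_Ici.mpr (le_of_lt hs))).deriv]
      have h0 : (0:ℝ) ≤ 8 * π * s ^ 2 * p s θ :=
        mul_nonneg (by positivity) (hp θ s (le_of_lt hs))
      linarith
  have key : h t ≤ h 1 := hanti (Set.self_mem_Ici) ht ht
  have hkey : t * g t ≤ g 1 - 1 + t := by
    simp only [hh_def] at key; nlinarith [key]
  have hD : 0 < g 1 - 1 + t := by
    have := hgpos 1; linarith
  rw [ge_iff_le, div_le_iff₀ hD]
  have hE : Real.exp (2 * μ t θ) * g t = 1 := by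
    rw [hg]; rw [← Real.exp_add]; ring_nf; exact Real.exp_zero
  have hEpos : 0 < Real.exp (2 * μ t θ) := Real.exp_pos _
  nlinarith [mul_le_mul_of_nonneg_left hkey hEpos.le, hE]
end

section
/- Let g : [1,∞) → (0,∞) be C¹ with g'(t) ≥ (1 − g(t))·g(t)/t for all t ≥ 1 (this is the differential inequality satisfied by e^{2μ}). Then g(t) ≥ t/(g(1)^{−1} − 1 + t) for all t ≥ 1. -/
/-- Comparison lemma for the Riccati-type inequality g' ≥ g(1−g)/t on [1,∞). -/
theorem stmt_5 (g g' : ℝ → ℝ)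
    (hpos : ∀ t ≥ (1:ℝ), 0 < g t)
    (hderiv : ∀ t ≥ (1:ℝ), HasDerivAt g (g' t) t)
    (hineq : ∀ t ≥ (1:ℝ), g' t ≥ (1 - g t) * g t / t) :
    ∀ t ≥ (1:ℝ), g t ≥ t / ((g 1)⁻¹ - 1 + t) := by
  set F : ℝ → ℝ := fun t => t * (g t)⁻¹ - t with hF
  have hFderiv : ∀ t ≥ (1:ℝ), HasDerivAt F ((g t)⁻¹ + t * (-(g' t) / (g t)^2) - 1) t := by
    intro t ht
    have hg := hpos t ht
    have h1 := (hderiv t ht).inv hg.ne'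
    have h2 := (hasDerivAt_id t).mul h1
    have h3 := h2.sub (hasDerivAt_id t)
    simp only [one_mul, id_eq, Pi.inv_apply] at h3
    exact h3
  have hcont : ContinuousOn F (Set.Ici 1) := fun t ht =>
    ((hFderiv t ht).continuousAt).continuousWithinAt
  have hanti : AntitoneOn F (Set.Ici 1) := by
    apply antitoneOn_of_deriv_nonpos (convex_Ici 1) hcont
    · intro x hx
      rw [interior_Ici] at hx
      exact ((hFderiv x hx.le).differentiableAt).differentiableWithinAt
    · intro x hx
      rw [interior_Ici] at hx
      have hx1 : (1:ℝ) ≤ x := hx.le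
      rw [(hFderiv x hx1).deriv]
      have hg := hpos x hx1
      have hx0 : (0:ℝ) < x := lt_trans zero_lt_one hx
      have h := hineq x hx1
      have h1 : (1 - g x) * g x ≤ x * g' x := by
        rw [ge_iff_le, div_le_iff₀ hx0] at h
        linarith
      have heq : (g x)⁻¹ + x * (-(g' x) / (g x)^2) - 1
          = (g x - x * g' x - (g x)^2) / (g x)^2 := by
        field_simp
        ring
      rw [heq]
      apply div_nonpos_of_nonpos_of_nonneg
      · nlinarith
      · positivity
  intro t ht
  have hF1 : F t ≤ F 1 := hanti (by simp) (Set.mem_Ici.mpr ht) ht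
  have hg := hpos t ht
  have ht0 : (0:ℝ) < t := lt_of_lt_of_le zero_lt_one ht
  have hkey : t * (g t)⁻¹ ≤ (g 1)⁻¹ - 1 + t := by
    simp only [hF, one_mul] at hF1
    linarith
  have hdpos : 0 < (g 1)⁻¹ - 1 + t :=
    lt_of_lt_of_le (by positivity) hkey
  rw [ge_iff_le, div_le_iff₀ hdpos]
  have : t / g t ≤ (g 1)⁻¹ - 1 + t := by rwa [div_eq_mul_inv]
  rw [div_le_iff₀ hg] at this
  linarith
end
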